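/- arXiv:2010.14905 — 6 statements merged into one kernel-verified Lean document; each statement's English description precedes it below -/
import Mathlib

section
/- Let n ≥ 1, and let ρ : ℝ × ℝⁿ → ℝ, V : ℝ × ℝⁿ → ℝⁿ, p : ℝ × ℝⁿ → ℝ be C¹ functions (with ρV also C¹ in t) satisfying the continuity equation ∂_t ρ + div_x(ρV) = 0 and the momentum equations ∂_t(ρVᵢ) + div_x(ρVᵢV) + ∂_{xᵢ} p = 0 (i = 1,…,n) pointwise. Assume there exists R > 0 such that for every t, the functions ρ(t,·), V(t,·), and p(t,·) vanish for |x| ≥ R. Then G(t) = (1/2)∫_{ℝⁿ} ρ(t,x)|x|² dx is twice differentiable in t with G'(t) = ∫_{ℝⁿ} ⟨V(t,x), x⟩ ρ(t,x) dx and G''(t) = ∫_{ℝⁿ} ρ|V|² dx + n ∫_{ℝⁿ} p dx. -/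
open MeasureTheory
open scoped RealInnerProductSpace

section aux
variable {n : ℕ}
local notation "E" => EuclideanSpace ℝ (Fin n)

private lemma sliceT' {F : ℝ × E → ℝ} {t : ℝ} {x : E} (hF : DifferentiableAt ℝ F (t, x)) :
    HasDerivAt (fun s => F (s, x)) (fderiv ℝ F (t, x) (1, 0)) t := by
  have h1 : HasFDerivAt (fun s : ℝ => (s, x)) (ContinuousLinearMap.inl ℝ ℝ E) t := by
    have := ((ContinuousLinearMap.inl ℝ ℝ E).hasFDerivAt (x := t)).add_const ((0 : ℝ), x)
    exact hasFDerivAt_prodMk_left t x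
  have h2 := (hF.hasFDerivAt.comp t h1).hasDerivAt
  exact h2

private lemma sliceX' {F : ℝ × E → ℝ} {t : ℝ} {x : E} (hF : DifferentiableAt ℝ F (t, x)) (v : E) :
    fderiv ℝ (fun y : E => F (t, y)) x v = fderiv ℝ F (t, x) (0, v) := by
  have h1 : HasFDerivAt (fun y : E => (t, y)) (ContinuousLinearMap.inr ℝ ℝ E) x := by
    have := ((ContinuousLinearMap.inr ℝ ℝ E).hasFDerivAt (x := x)).add_const ((t : ℝ), (0 : E))
    exact hasFDerivAt_prodMk_right t x
  have h2 := (hF.hasFDerivAt.comp x h1).fderiv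
  rw [show (fun y : E => F (t, y)) = F ∘ Prod.mk t from rfl, h2]; simp

private lemma integ_of_supp' {R : ℝ} {g : E → ℝ} (hg : Continuous g)
    (h : ∀ x : E, R < ‖x‖ → g x = 0) : Integrable g := by
  apply hg.integrable_of_hasCompactSupport
  apply HasCompactSupport.intro (isCompact_closedBall (0 : E) R)
  intro x hx
  apply h
  simpa [Metric.mem_closedBall, dist_zero_right] using hx

private lemma fderiv_supp_zero' {X : Type*} [NormedAddCommGroup X] [NormedSpace ℝ X]
    {Y : Type*} [NormedAddCommGroup Y] [NormedSpace ℝ Y]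
    {g : X → Y} {U : Set X} (hU : IsOpen U) (h : ∀ x ∈ U, g x = 0)
    {x : X} (hx : x ∈ U) : fderiv ℝ g x = 0 := by
  have he : g =ᶠ[nhds x] (fun _ => (0 : Y)) :=
    Filter.eventually_of_mem (hU.mem_nhds hx) h
  rw [he.fderiv_eq, fderiv_fun_const]
  rfl

private lemma contFDerivApply' {X : Type*} [NormedAddCommGroup X] [NormedSpace ℝ X]
    {g : X → ℝ} (hg : ContDiff ℝ 1 g) (v : X) :
    Continuous fun x => fderiv ℝ g x v :=
  (ContinuousLinearMap.apply ℝ ℝ v).continuous.comp (hg.continuous_fderiv one_ne_zero)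

/-- differentiation under the integral sign for compactly supported `C¹` integrands. -/
private lemma master' {R : ℝ} (hR : 0 < R) {F : ℝ × E → ℝ} (hF : ContDiff ℝ 1 F)
    (hsupp : ∀ s : ℝ, ∀ x : E, R < ‖x‖ → F (s, x) = 0) (t : ℝ) :
    HasDerivAt (fun s => ∫ x : E, F (s, x)) (∫ x : E, fderiv ℝ F (t, x) (1, 0)) t := by
  have hUopen : IsOpen {q : ℝ × E | R < ‖q.2‖} :=
    isOpen_lt continuous_const (continuous_norm.comp continuous_snd)
  have hfd0 : ∀ (s : ℝ) (x : E), R < ‖x‖ → fderiv ℝ F (s, x) = 0 := by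
    intro s x hx
    have he : F =ᶠ[nhds ((s : ℝ), x)] (fun _ => (0 : ℝ)) :=
      Filter.eventually_of_mem (hUopen.mem_nhds hx) (fun q hq => hsupp q.1 q.2 hq)
    rw [he.fderiv_eq, fderiv_fun_const]; rfl
  have hcontF' : Continuous fun q : ℝ × E => fderiv ℝ F q (1, 0) := by
    exact (ContinuousLinearMap.apply ℝ ℝ ((1 : ℝ), (0 : E))).continuous.comp
      (hF.continuous_fderiv one_ne_zero)
  obtain ⟨C, hC⟩ := (((isCompact_Icc (a := t - 1) (b := t + 1)).prod
      (isCompact_closedBall (0 : E) R))).exists_bound_of_continuousOn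
      (hcontF'.continuousOn (s := Set.Icc (t-1) (t+1) ×ˢ Metric.closedBall (0:E) R))
  set bound : E → ℝ := (Metric.closedBall (0 : E) R).indicator (fun _ => C) with hbdef
  have hbint : Integrable bound := by
    rw [hbdef, integrable_indicator_iff measurableSet_closedBall]
    exact integrableOn_const (measure_closedBall_lt_top.ne)
  have key := hasDerivAt_integral_of_dominated_loc_of_deriv_le (μ := (volume : Measure E))
    (F := fun s x => F (s, x)) (F' := fun s x => fderiv ℝ F (s, x) (1, 0))
    (x₀ := t) (bound := bound) (Metric.ball_mem_nhds t one_pos)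
    (Filter.Eventually.of_forall (fun s =>
      ((hF.continuous.comp (Continuous.prodMk_right s)).aestronglyMeasurable)))
    (?_) (?_) (?_) hbint (?_)
  · exact key.2
  · exact integ_of_supp' (hF.continuous.comp (Continuous.prodMk_right t)) (fun x hx => hsupp t x hx)
  · exact (hcontF'.comp (Continuous.prodMk_right t)).aestronglyMeasurable
  · refine Filter.Eventually.of_forall (fun x => fun s hs => ?_)
    by_cases hx : ‖x‖ ≤ R
    · have hmem : x ∈ Metric.closedBall (0 : E) R := by
        simpa [Metric.mem_closedBall, dist_zero_right] using hx
      have : bound x = C := by rw [hbdef, Set.indicator_of_mem hmem]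
      rw [this]
      apply hC
      constructor
      · have := Metric.mem_ball.1 hs
        rw [Real.dist_eq] at this
        constructor <;> [linarith [abs_lt.1 this]; linarith [abs_lt.1 this]]
      · exact hmem
    · push_neg at hx
      have hmem : x ∉ Metric.closedBall (0 : E) R := by
        simp [Metric.mem_closedBall, dist_zero_right]; linarith
      have : bound x = 0 := by rw [hbdef, Set.indicator_of_notMem hmem]
      rw [this]
      show ‖fderiv ℝ F (s, x) (1, 0)‖ ≤ 0
      rw [hfd0 s x hx]
      simp
  · refine Filter.Eventually.of_forall (fun x => fun s _ => ?_)
    exact sliceT' ((hF.differentiable one_ne_zero) (s, x))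

/-- integration by parts: `g` compactly supported, `f` arbitrary `C¹`. -/
private lemma ibp' {R : ℝ} {f g : E → ℝ} (hf : ContDiff ℝ 1 f) (hg : ContDiff ℝ 1 g)
    (hgsupp : ∀ x : E, R < ‖x‖ → g x = 0) (v : E) :
    ∫ x : E, f x * fderiv ℝ g x v = - ∫ x : E, fderiv ℝ f x v * g x := by
  have hU : IsOpen {x : E | R < ‖x‖} := isOpen_lt continuous_const continuous_norm
  have hgd0 : ∀ x : E, R < ‖x‖ → fderiv ℝ g x = 0 :=
    fun x hx => fderiv_supp_zero' hU (fun y hy => hgsupp y hy) hx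
  apply integral_mul_fderiv_eq_neg_fderiv_mul_of_integrable
  · exact integ_of_supp' ((contFDerivApply' hf v).mul hg.continuous)
      (fun x hx => by rw [hgsupp x hx, mul_zero])
  · exact integ_of_supp' (hf.continuous.mul (contFDerivApply' hg v))
      (fun x hx => by
        rw [show fderiv ℝ g x v = 0 from by rw [hgd0 x hx]; rfl, mul_zero])
  · exact integ_of_supp' (hf.continuous.mul hg.continuous)
      (fun x hx => by rw [hgsupp x hx, mul_zero])
  · exact fun x _ => hf.differentiable one_ne_zero x
  · exact fun x _ => hg.differentiable one_ne_zero x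


set_option maxHeartbeats 1000000 in
private lemma part1 {R : ℝ} (hR : 0 < R)
    {ρ : ℝ × E → ℝ} {V : ℝ × E → E}
    (hρ : ContDiff ℝ 1 ρ) (hV : ContDiff ℝ 1 V)
    (hcont : ∀ t : ℝ, ∀ x : E,
      fderiv ℝ ρ (t, x) (1, 0)
        + ∑ i : Fin n,
            fderiv ℝ (fun q => ρ q * V q i) (t, x) (0, EuclideanSpace.single i 1) = 0)
    (hsupp : ∀ t : ℝ, ∀ x : E, R ≤ ‖x‖ → ρ (t, x) = 0)
    (t : ℝ) :
    HasDerivAt (fun s => (1 / 2) * ∫ x : E, ρ (s, x) * ‖x‖ ^ 2)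
      (∫ x : E, ⟪V (t, x), x⟫ * ρ (t, x)) t := by
  classical
  set v : Fin n → E := fun i => EuclideanSpace.single i 1 with hv
  have hVi : ∀ i : Fin n, ContDiff ℝ 1 (fun q : ℝ × E => V q i) := fun i =>
    (ContinuousLinearMap.contDiff (EuclideanSpace.proj i : E →L[ℝ] ℝ)).comp hV
  have hρVi : ∀ i : Fin n, ContDiff ℝ 1 (fun q : ℝ × E => ρ q * V q i) := fun i =>
    hρ.mul (hVi i)
  have hgi : ∀ i : Fin n, ContDiff ℝ 1 (fun x : E => ρ (t, x) * V (t, x) i) := fun i =>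
    (hρVi i).comp (contDiff_const.prodMk contDiff_id)
  have hnorm2 : ContDiff ℝ 1 (fun x : E => ‖x‖ ^ 2) := contDiff_id.norm_sq ℝ
  have hF1 : ContDiff ℝ 1 (fun q : ℝ × E => ρ q * ‖q.2‖ ^ 2) :=
    hρ.mul (contDiff_snd.norm_sq ℝ)
  have hF1supp : ∀ s : ℝ, ∀ x : E, R < ‖x‖ → ρ (s, x) * ‖x‖ ^ 2 = 0 := fun s x hx => by
    rw [hsupp s x hx.le, zero_mul]
  have hmain := master' hR hF1 hF1supp t
  have hgsupp : ∀ (i : Fin n) (x : E), R < ‖x‖ → ρ (t, x) * V (t, x) i = 0 :=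
    fun i x hx => by rw [hsupp t x hx.le, zero_mul]
  -- pointwise computation of the time derivative of F1
  have hps : ∀ x : E, fderiv ℝ (fun q : ℝ × E => ρ q * ‖q.2‖ ^ 2) (t, x) (1, 0)
      = ∑ i : Fin n,
          -(fderiv ℝ (fun y : E => ρ (t, y) * V (t, y) i) x (v i) * ‖x‖ ^ 2) := by
    intro x
    have hd1 : HasDerivAt (fun s : ℝ => ρ (s, x) * ‖x‖ ^ 2)
        (fderiv ℝ ρ (t, x) (1, 0) * ‖x‖ ^ 2) t :=
      (sliceT' (hρ.differentiable one_ne_zero (t, x))).mul_const _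
    have hd2 : HasDerivAt (fun s : ℝ => ρ (s, x) * ‖x‖ ^ 2)
        (fderiv ℝ (fun q : ℝ × E => ρ q * ‖q.2‖ ^ 2) (t, x) (1, 0)) t :=
      sliceT' (hF1.differentiable one_ne_zero (t, x))
    have e1 : fderiv ℝ (fun q : ℝ × E => ρ q * ‖q.2‖ ^ 2) (t, x) (1, 0)
        = fderiv ℝ ρ (t, x) (1, 0) * ‖x‖ ^ 2 := hd2.unique hd1
    have e2 : fderiv ℝ ρ (t, x) (1, 0)
        = -∑ i : Fin n, fderiv ℝ (fun q => ρ q * V q i) (t, x) (0, v i) :=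
      eq_neg_of_add_eq_zero_left (hcont t x)
    have e3 : ∀ i : Fin n, fderiv ℝ (fun q => ρ q * V q i) (t, x) (0, v i)
        = fderiv ℝ (fun y : E => ρ (t, y) * V (t, y) i) x (v i) := fun i =>
      (sliceX' ((hρVi i).differentiable one_ne_zero (t, x)) (v i)).symm
    rw [e1, e2]
    rw [Finset.sum_congr rfl (fun i _ => e3 i)]
    rw [neg_mul, Finset.sum_mul, ← Finset.sum_neg_distrib]
  -- integrability of each summand
  have hU : IsOpen {x : E | R < ‖x‖} := isOpen_lt continuous_const continuous_norm
  have hgd0 : ∀ (i : Fin n) (x : E), R < ‖x‖ →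
      fderiv ℝ (fun y : E => ρ (t, y) * V (t, y) i) x = 0 := fun i x hx =>
    fderiv_supp_zero' hU (fun y hy => hgsupp i y hy) hx
  have hint1 : ∀ i : Fin n, Integrable
      (fun x : E => fderiv ℝ (fun y : E => ρ (t, y) * V (t, y) i) x (v i) * ‖x‖ ^ 2) :=
    fun i => integ_of_supp' ((contFDerivApply' (hgi i) (v i)).mul hnorm2.continuous)
      (fun x hx => by
        rw [show fderiv ℝ (fun y : E => ρ (t, y) * V (t, y) i) x (v i) = 0 from by
          rw [hgd0 i x hx]; rfl, zero_mul])
  -- the value of the derivative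
  have hval : ∫ x : E, fderiv ℝ (fun q : ℝ × E => ρ q * ‖q.2‖ ^ 2) (t, x) (1, 0)
      = ∑ i : Fin n, ∫ x : E, 2 * x i * (ρ (t, x) * V (t, x) i) := by
    rw [integral_congr_ae (Filter.Eventually.of_forall hps)]
    have hsum : (∫ a : E, ∑ i : Fin n,
          -(fderiv ℝ (fun y : E => ρ (t, y) * V (t, y) i) a (v i) * ‖a‖ ^ 2))
        = ∑ i : Fin n, ∫ a : E,
          -(fderiv ℝ (fun y : E => ρ (t, y) * V (t, y) i) a (v i) * ‖a‖ ^ 2) :=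
      integral_finset_sum _ (fun i _ => (hint1 i).neg)
    rw [hsum]
    refine Finset.sum_congr rfl (fun i _ => ?_)
    rw [integral_neg]
    have hcomm : (∫ x : E, fderiv ℝ (fun y : E => ρ (t, y) * V (t, y) i) x (v i) * ‖x‖ ^ 2)
        = ∫ x : E, ‖x‖ ^ 2 * fderiv ℝ (fun y : E => ρ (t, y) * V (t, y) i) x (v i) :=
      integral_congr_ae (Filter.Eventually.of_forall (fun x => mul_comm _ _))
    rw [hcomm, ibp' (R := R) hnorm2 (hgi i) (hgsupp i) (v i), neg_neg]
    refine integral_congr_ae (Filter.Eventually.of_forall (fun x : E => ?_))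
    beta_reduce
    congr 1
    have h := (hasFDerivAt_id (𝕜 := ℝ) x).norm_sq
    simp only [id] at h
    rw [h.fderiv]
    simp [hv, EuclideanSpace.inner_single_right]
  -- final assembly
  have hint2 : ∀ i : Fin n, Integrable (fun x : E => x i * (ρ (t, x) * V (t, x) i)) :=
    fun i => integ_of_supp' (((EuclideanSpace.proj i :
        E →L[ℝ] ℝ).continuous).mul (hgi i).continuous)
      (fun x hx => by rw [hgsupp i x hx, mul_zero])
  have hrhs : ∫ x : E, ⟪V (t, x), x⟫ * ρ (t, x)
      = ∑ i : Fin n, ∫ x : E, x i * (ρ (t, x) * V (t, x) i) := by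
    have hpt : ∀ x : E, ⟪V (t, x), x⟫ * ρ (t, x)
        = ∑ i : Fin n, x i * (ρ (t, x) * V (t, x) i) := by
      intro x
      have h1 : ⟪V (t, x), x⟫ = ∑ i : Fin n, V (t, x) i * x i := by
        simp [PiLp.inner_apply, RCLike.inner_apply]
        exact Finset.sum_congr rfl (fun _ _ => mul_comm _ _)
      rw [h1, Finset.sum_mul]
      exact Finset.sum_congr rfl (fun i _ => by ring)
    rw [integral_congr_ae (Filter.Eventually.of_forall hpt)]
    exact integral_finset_sum _ (fun i _ => hint2 i)
  have hfin : (1 / 2 : ℝ) * ∫ x : E, fderiv ℝ (fun q : ℝ × E => ρ q * ‖q.2‖ ^ 2) (t, x) (1, 0)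
      = ∫ x : E, ⟪V (t, x), x⟫ * ρ (t, x) := by
    rw [hval, hrhs, Finset.mul_sum]
    refine Finset.sum_congr rfl (fun i _ => ?_)
    rw [← integral_const_mul]
    exact integral_congr_ae (Filter.Eventually.of_forall (fun x => by ring))
  have := (hmain.const_mul (1 / 2 : ℝ))
  rw [hfin] at this
  exact this

private lemma part2 {R : ℝ} (hR : 0 < R)
    {ρ : ℝ × E → ℝ} {V : ℝ × E → E} {p : ℝ × E → ℝ}
    (hρ : ContDiff ℝ 1 ρ) (hV : ContDiff ℝ 1 V) (hp : ContDiff ℝ 1 p)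
    (hmom : ∀ t : ℝ, ∀ x : E, ∀ i : Fin n,
      fderiv ℝ (fun q => ρ q * V q i) (t, x) (1, 0)
        + ∑ j : Fin n,
            fderiv ℝ (fun q => ρ q * V q i * V q j) (t, x) (0, EuclideanSpace.single j 1)
        + fderiv ℝ p (t, x) (0, EuclideanSpace.single i 1) = 0)
    (hsuppρ : ∀ t : ℝ, ∀ x : E, R ≤ ‖x‖ → ρ (t, x) = 0)
    (hsuppp : ∀ t : ℝ, ∀ x : E, R ≤ ‖x‖ → p (t, x) = 0)
    (t : ℝ) :
    HasDerivAt (fun s => ∫ x : E, ⟪V (s, x), x⟫ * ρ (s, x))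
      ((∫ x : E, ρ (t, x) * ‖V (t, x)‖ ^ 2)
        + n * ∫ x : E, p (t, x)) t := by
  classical
  set v : Fin n → E := fun i => EuclideanSpace.single i 1 with hv
  have hVi : ∀ i : Fin n, ContDiff ℝ 1 (fun q : ℝ × E => V q i) := fun i =>
    (ContinuousLinearMap.contDiff (EuclideanSpace.proj i : E →L[ℝ] ℝ)).comp hV
  have hρVi : ∀ i : Fin n, ContDiff ℝ 1 (fun q : ℝ × E => ρ q * V q i) := fun i =>
    hρ.mul (hVi i)
  have hgij : ∀ i j : Fin n, ContDiff ℝ 1 (fun q : ℝ × E => ρ q * V q i * V q j) :=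
    fun i j => (hρVi i).mul (hVi j)
  have hgijt : ∀ i j : Fin n, ContDiff ℝ 1 (fun x : E => ρ (t, x) * V (t, x) i * V (t, x) j) :=
    fun i j => (hgij i j).comp (contDiff_const.prodMk contDiff_id)
  have hpst : ContDiff ℝ 1 (fun x : E => p (t, x)) := hp.comp (contDiff_const.prodMk contDiff_id)
  have hproji : ∀ i : Fin n, ContDiff ℝ 1 (fun y : E => y i) := fun i =>
    ContinuousLinearMap.contDiff (EuclideanSpace.proj i : E →L[ℝ] ℝ)
  have hq2i : ∀ i : Fin n, ContDiff ℝ 1 (fun q : ℝ × E => q.2 i) := fun i =>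
    ContinuousLinearMap.contDiff
      ((EuclideanSpace.proj i : E →L[ℝ] ℝ).comp (ContinuousLinearMap.snd ℝ ℝ E))
  -- the integrand as a finite sum
  have hF2 : ContDiff ℝ 1 (fun q : ℝ × E => ∑ i : Fin n, ρ q * V q i * q.2 i) :=
    ContDiff.sum (fun i _ => (hρVi i).mul (hq2i i))
  have hF2supp : ∀ s : ℝ, ∀ x : E, R < ‖x‖ → (∑ i : Fin n, ρ (s, x) * V (s, x) i * x i) = 0 :=
    fun s x hx => by
      refine Finset.sum_eq_zero (fun i _ => ?_)
      rw [hsuppρ s x hx.le, zero_mul, zero_mul]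
  have hfun : (fun s : ℝ => ∫ x : E, ⟪V (s, x), x⟫ * ρ (s, x))
      = fun s : ℝ => ∫ x : E, ∑ i : Fin n, ρ (s, x) * V (s, x) i * x i := by
    funext s
    refine integral_congr_ae (Filter.Eventually.of_forall (fun x : E => ?_))
    beta_reduce
    have h1 : ⟪V (s, x), x⟫ = ∑ i : Fin n, V (s, x) i * x i := by
      simp [PiLp.inner_apply, RCLike.inner_apply]
      exact Finset.sum_congr rfl (fun _ _ => mul_comm _ _)
    rw [h1, Finset.sum_mul]
    exact Finset.sum_congr rfl (fun i _ => by ring)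
  rw [hfun]
  have hmain := master' hR hF2 hF2supp t
  -- supports and basic integrabilities
  have hU : IsOpen {x : E | R < ‖x‖} := isOpen_lt continuous_const continuous_norm
  have hgijsupp : ∀ (i j : Fin n) (x : E), R < ‖x‖ → ρ (t, x) * V (t, x) i * V (t, x) j = 0 :=
    fun i j x hx => by rw [hsuppρ t x hx.le, zero_mul, zero_mul]
  have hpssupp : ∀ x : E, R < ‖x‖ → p (t, x) = 0 := fun x hx => hsuppp t x hx.le
  have hgijd0 : ∀ (i j : Fin n) (x : E), R < ‖x‖ →
      fderiv ℝ (fun y : E => ρ (t, y) * V (t, y) i * V (t, y) j) x = 0 := fun i j x hx =>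
    fderiv_supp_zero' hU (fun y hy => hgijsupp i j y hy) hx
  have hpsd0 : ∀ x : E, R < ‖x‖ → fderiv ℝ (fun y : E => p (t, y)) x = 0 := fun x hx =>
    fderiv_supp_zero' hU (fun y hy => hpssupp y hy) hx
  have hintij : ∀ i j : Fin n, Integrable
      (fun x : E => -(fderiv ℝ (fun y : E => ρ (t, y) * V (t, y) i * V (t, y) j) x (v j) * x i)) :=
    fun i j => (integ_of_supp' ((contFDerivApply' (hgijt i j) (v j)).mul
        ((EuclideanSpace.proj i : E →L[ℝ] ℝ).continuous))
      (fun x hx => by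
        rw [Pi.mul_apply, show fderiv ℝ (fun y : E => ρ (t, y) * V (t, y) i * V (t, y) j) x (v j) = 0 from by
          rw [hgijd0 i j x hx]; rfl, zero_mul])).neg
  have hintp : ∀ i : Fin n, Integrable
      (fun x : E => -(fderiv ℝ (fun y : E => p (t, y)) x (v i) * x i)) :=
    fun i => (integ_of_supp' ((contFDerivApply' hpst (v i)).mul
        ((EuclideanSpace.proj i : E →L[ℝ] ℝ).continuous))
      (fun x hx => by
        rw [Pi.mul_apply, show fderiv ℝ (fun y : E => p (t, y)) x (v i) = 0 from by
          rw [hpsd0 x hx]; rfl, zero_mul])).neg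
  -- pointwise time derivative
  have hps : ∀ x : E, fderiv ℝ (fun q : ℝ × E => ∑ i : Fin n, ρ q * V q i * q.2 i) (t, x) (1, 0)
      = (∑ i : Fin n, ∑ j : Fin n,
          -(fderiv ℝ (fun y : E => ρ (t, y) * V (t, y) i * V (t, y) j) x (v j) * x i))
        + ∑ i : Fin n, -(fderiv ℝ (fun y : E => p (t, y)) x (v i) * x i) := by
    intro x
    have hd1 : HasDerivAt (fun s : ℝ => ∑ i : Fin n, ρ (s, x) * V (s, x) i * x i)
        (∑ i : Fin n, fderiv ℝ (fun q : ℝ × E => ρ q * V q i) (t, x) (1, 0) * x i) t :=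
      HasDerivAt.fun_sum (fun i _ =>
        (sliceT' ((hρVi i).differentiable one_ne_zero (t, x))).mul_const (x i))
    have hd2 : HasDerivAt (fun s : ℝ => ∑ i : Fin n, ρ (s, x) * V (s, x) i * x i)
        (fderiv ℝ (fun q : ℝ × E => ∑ i : Fin n, ρ q * V q i * q.2 i) (t, x) (1, 0)) t :=
      sliceT' (hF2.differentiable one_ne_zero (t, x))
    rw [hd2.unique hd1]
    have e2 : ∀ i : Fin n, fderiv ℝ (fun q : ℝ × E => ρ q * V q i) (t, x) (1, 0)
        = -(∑ j : Fin n, fderiv ℝ (fun q => ρ q * V q i * V q j) (t, x) (0, v j))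
          - fderiv ℝ p (t, x) (0, v i) := fun i => by
      have := hmom t x i
      simp only [hv]
      linarith
    have e3 : ∀ i j : Fin n, fderiv ℝ (fun q => ρ q * V q i * V q j) (t, x) (0, v j)
        = fderiv ℝ (fun y : E => ρ (t, y) * V (t, y) i * V (t, y) j) x (v j) := fun i j =>
      (sliceX' ((hgij i j).differentiable one_ne_zero (t, x)) (v j)).symm
    have e4 : ∀ i : Fin n, fderiv ℝ p (t, x) (0, v i)
        = fderiv ℝ (fun y : E => p (t, y)) x (v i) := fun i =>
      (sliceX' ((hp).differentiable one_ne_zero (t, x)) (v i)).symm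
    rw [← Finset.sum_add_distrib]
    refine Finset.sum_congr rfl (fun i _ => ?_)
    rw [e2 i, e4 i, Finset.sum_congr rfl (fun j _ => e3 i j)]
    rw [show (∑ j : Fin n,
        -(fderiv ℝ (fun y : E => ρ (t, y) * V (t, y) i * V (t, y) j) x (v j) * x i))
      = -((∑ j : Fin n,
          fderiv ℝ (fun y : E => ρ (t, y) * V (t, y) i * V (t, y) j) x (v j)) * x i) from by
      rw [Finset.sum_mul, ← Finset.sum_neg_distrib]]
    ring
  -- evaluate the integral of the time derivative
  have hval : ∫ x : E,
        fderiv ℝ (fun q : ℝ × E => ∑ i : Fin n, ρ q * V q i * q.2 i) (t, x) (1, 0)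
      = (∫ x : E, ρ (t, x) * ‖V (t, x)‖ ^ 2) + n * ∫ x : E, p (t, x) := by
    rw [integral_congr_ae (Filter.Eventually.of_forall hps)]
    have hintA : ∀ i : Fin n, Integrable (fun x : E => ∑ j : Fin n,
        -(fderiv ℝ (fun y : E => ρ (t, y) * V (t, y) i * V (t, y) j) x (v j) * x i)) :=
      fun i => integrable_finset_sum _ (fun j _ => hintij i j)
    have hsplit : ∫ x : E, ((∑ i : Fin n, ∑ j : Fin n,
          -(fderiv ℝ (fun y : E => ρ (t, y) * V (t, y) i * V (t, y) j) x (v j) * x i))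
        + ∑ i : Fin n, -(fderiv ℝ (fun y : E => p (t, y)) x (v i) * x i))
        = (∑ i : Fin n, ∑ j : Fin n, ∫ x : E,
          -(fderiv ℝ (fun y : E => ρ (t, y) * V (t, y) i * V (t, y) j) x (v j) * x i))
        + ∑ i : Fin n, ∫ x : E, -(fderiv ℝ (fun y : E => p (t, y)) x (v i) * x i) := by
      rw [integral_add (integrable_finset_sum _ (fun i _ => hintA i))
        (integrable_finset_sum _ (fun i _ => hintp i)),
        integral_finset_sum _ (fun i _ => hintA i),
        integral_finset_sum _ (fun i _ => hintp i)]
      congr 1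
      exact Finset.sum_congr rfl (fun i _ => integral_finset_sum _ (fun j _ => hintij i j))
    rw [hsplit]
    -- the pressure terms
    have hpterm : ∀ i : Fin n,
        (∫ x : E, -(fderiv ℝ (fun y : E => p (t, y)) x (v i) * x i)) = ∫ x : E, p (t, x) := by
      intro i
      rw [integral_neg]
      have hcomm : (∫ x : E, fderiv ℝ (fun y : E => p (t, y)) x (v i) * x i)
          = ∫ x : E, x i * fderiv ℝ (fun y : E => p (t, y)) x (v i) :=
        integral_congr_ae (Filter.Eventually.of_forall (fun x => mul_comm _ _))
      rw [hcomm, ibp' (R := R) (hproji i) hpst hpssupp (v i), neg_neg]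
      refine integral_congr_ae (Filter.Eventually.of_forall (fun x : E => ?_))
      beta_reduce
      have hfd : fderiv ℝ (fun y : E => y i) x = (EuclideanSpace.proj i : E →L[ℝ] ℝ) :=
        (EuclideanSpace.proj i : E →L[ℝ] ℝ).fderiv
      rw [hfd]
      have : (EuclideanSpace.proj i : E →L[ℝ] ℝ) (v i) = 1 := by simp [hv]
      rw [this, one_mul]
    -- the kinetic terms
    have hkterm : ∀ i j : Fin n,
        (∫ x : E, -(fderiv ℝ (fun y : E => ρ (t, y) * V (t, y) i * V (t, y) j) x (v j) * x i))
        = if i = j then ∫ x : E, ρ (t, x) * V (t, x) i * V (t, x) j else 0 := by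
      intro i j
      rw [integral_neg]
      have hcomm : (∫ x : E, fderiv ℝ (fun y : E => ρ (t, y) * V (t, y) i * V (t, y) j) x (v j)
            * x i)
          = ∫ x : E, x i *
            fderiv ℝ (fun y : E => ρ (t, y) * V (t, y) i * V (t, y) j) x (v j) :=
        integral_congr_ae (Filter.Eventually.of_forall (fun x => mul_comm _ _))
      rw [hcomm, ibp' (R := R) (hproji i) (hgijt i j) (hgijsupp i j) (v j), neg_neg]
      have hptws : ∀ x : E, fderiv ℝ (fun y : E => y i) x (v j)
            * (ρ (t, x) * V (t, x) i * V (t, x) j)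
          = if i = j then ρ (t, x) * V (t, x) i * V (t, x) j else 0 := by
        intro x
        have hfd : fderiv ℝ (fun y : E => y i) x = (EuclideanSpace.proj i : E →L[ℝ] ℝ) :=
          (EuclideanSpace.proj i : E →L[ℝ] ℝ).fderiv
        rw [hfd]
        have h5 : (EuclideanSpace.proj i : E →L[ℝ] ℝ) (v j) = if i = j then 1 else 0 := by
          simp [hv, EuclideanSpace.single_apply]
        rw [h5]
        by_cases h : i = j <;> simp [h]
      rw [integral_congr_ae (Filter.Eventually.of_forall hptws)]
      by_cases h : i = j
      · simp [h]
      · simp [h]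
    -- assemble
    have hsum1 : (∑ i : Fin n, ∑ j : Fin n, ∫ x : E,
          -(fderiv ℝ (fun y : E => ρ (t, y) * V (t, y) i * V (t, y) j) x (v j) * x i))
        = ∑ i : Fin n, ∫ x : E, ρ (t, x) * V (t, x) i * V (t, x) i := by
      refine Finset.sum_congr rfl (fun i _ => ?_)
      rw [Finset.sum_congr rfl (fun j _ => hkterm i j)]
      simp
    have hsum2 : (∑ i : Fin n, ∫ x : E, -(fderiv ℝ (fun y : E => p (t, y)) x (v i) * x i))
        = (n : ℝ) * ∫ x : E, p (t, x) := by
      rw [Finset.sum_congr rfl (fun i _ => hpterm i), Finset.sum_const, Finset.card_univ,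
        Fintype.card_fin, nsmul_eq_mul]
    rw [hsum1, hsum2]
    congr 1
    have hintii : ∀ i : Fin n, Integrable (fun x : E => ρ (t, x) * V (t, x) i * V (t, x) i) :=
      fun i => integ_of_supp' (hgijt i i).continuous (hgijsupp i i)
    rw [← integral_finset_sum _ (fun i _ => hintii i)]
    refine integral_congr_ae (Filter.Eventually.of_forall (fun x : E => ?_))
    beta_reduce
    have hnv : ‖V (t, x)‖ ^ 2 = ∑ i : Fin n, V (t, x) i * V (t, x) i := by
      rw [← real_inner_self_eq_norm_sq]
      simp only [PiLp.inner_apply, RCLike.inner_apply, conj_trivial]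
    rw [hnv, Finset.mul_sum]
    exact Finset.sum_congr rfl (fun i _ => by ring)
  rw [hval] at hmain
  exact hmain

end aux

/-- Corollary 1: second moment of mass, compactly supported flow.
For `C¹` compactly supported solutions of the continuity and momentum equations,
`G(t) = (1/2)∫ ρ(t,x)|x|² dx` satisfies `G'(t) = ∫ ⟨V,x⟩ ρ dx` and
`G''(t) = ∫ ρ|V|² dx + n ∫ p dx`. -/
theorem stmt2
    (n : ℕ) (hn : 1 ≤ n)
    (ρ : ℝ × EuclideanSpace ℝ (Fin n) → ℝ)
    (V : ℝ × EuclideanSpace ℝ (Fin n) → EuclideanSpace ℝ (Fin n))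
    (p : ℝ × EuclideanSpace ℝ (Fin n) → ℝ)
    (hρ : ContDiff ℝ 1 ρ) (hV : ContDiff ℝ 1 V) (hp : ContDiff ℝ 1 p)
    (hρV : ContDiff ℝ 1 (fun q => ρ q • V q))
    (hcont : ∀ t : ℝ, ∀ x : EuclideanSpace ℝ (Fin n),
      fderiv ℝ ρ (t, x) (1, 0)
        + ∑ i : Fin n,
            fderiv ℝ (fun q => ρ q * V q i) (t, x) (0, EuclideanSpace.single i 1) = 0)
    (hmom : ∀ t : ℝ, ∀ x : EuclideanSpace ℝ (Fin n), ∀ i : Fin n,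
      fderiv ℝ (fun q => ρ q * V q i) (t, x) (1, 0)
        + ∑ j : Fin n,
            fderiv ℝ (fun q => ρ q * V q i * V q j) (t, x) (0, EuclideanSpace.single j 1)
        + fderiv ℝ p (t, x) (0, EuclideanSpace.single i 1) = 0)
    (R : ℝ) (hR : 0 < R)
    (hsupp : ∀ t : ℝ, ∀ x : EuclideanSpace ℝ (Fin n), R ≤ ‖x‖ →
      ρ (t, x) = 0 ∧ V (t, x) = 0 ∧ p (t, x) = 0) :
    (∀ t : ℝ,
      HasDerivAt (fun s => (1 / 2) * ∫ x : EuclideanSpace ℝ (Fin n), ρ (s, x) * ‖x‖ ^ 2)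
        (∫ x : EuclideanSpace ℝ (Fin n), ⟪V (t, x), x⟫ * ρ (t, x)) t) ∧
    ∀ t : ℝ,
      HasDerivAt (fun s => ∫ x : EuclideanSpace ℝ (Fin n), ⟪V (s, x), x⟫ * ρ (s, x))
        ((∫ x : EuclideanSpace ℝ (Fin n), ρ (t, x) * ‖V (t, x)‖ ^ 2)
          + n * ∫ x : EuclideanSpace ℝ (Fin n), p (t, x)) t := by
  constructor
  · intro t
    exact part1 hR hρ hV hcont (fun t x hx => (hsupp t x hx).1) t
  · intro t
    exact part2 hR hρ hV hp hmom (fun t x hx => (hsupp t x hx).1)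
      (fun t x hx => (hsupp t x hx).2.2) t
end

section
/- Let γ > 1 and K₁ ≥ 0 be real constants, let K₂ : [0,T] → ℝ be continuous, and let y₋, y₊ : [0,T] → ℝ be twice differentiable functions such that y₋''(t) = K₁ y₋(t)^γ − K₂(t) and y₊''(t) ≥ K₁ y₊(t)^γ − K₂(t) for all t ∈ [0,T]. Assume y₊(t) > 0 for all t ∈ [0,T], y₋(0) > 0, y₋(0) ≤ y₊(0), y₋'(0) ≤ y₊'(0), and y₋(t) > 0 for all t ∈ (0,T]. Then y₋(t) ≤ y₊(t) for all t ∈ [0,T]. -/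
open Set Filter Nat

/-- If `f` has nonnegative derivative on `[0,T]` and `f 0 ≥ 0`, then `f ≥ 0` on `[0,T]`. -/
private lemma nonneg_of_deriv_nonneg {T : ℝ} (hT : 0 ≤ T) (f f' : ℝ → ℝ)
    (hf : ∀ t ∈ Icc (0:ℝ) T, HasDerivAt f (f' t) t)
    (hf' : ∀ t ∈ Icc (0:ℝ) T, 0 ≤ f' t) (h0 : 0 ≤ f 0) :
    ∀ t ∈ Icc (0:ℝ) T, 0 ≤ f t := by
  intro t ht
  have hmono : MonotoneOn f (Icc (0:ℝ) T) := by
    apply monotoneOn_of_deriv_nonneg (convex_Icc 0 T)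
    · intro x hx; exact (hf x hx).continuousAt.continuousWithinAt
    · intro x hx
      rw [interior_Icc] at hx
      exact (hf x (Ioo_subset_Icc_self hx)).differentiableAt.differentiableWithinAt
    · intro x hx
      rw [interior_Icc] at hx
      rw [(hf x (Ioo_subset_Icc_self hx)).deriv]
      exact hf' x (Ioo_subset_Icc_self hx)
  exact h0.trans (hmono (left_mem_Icc.2 hT) ht ht.1)

/-- Key ODE lemma: if `w'' ≥ M * min (w t) 0` on `[0,T]` with `M ≥ 0`,
`w 0 ≥ 0`, `w' 0 ≥ 0`, then `w ≥ 0` on `[0,T]`. -/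
private lemma key_nonneg {T M : ℝ} (hT : 0 ≤ T) (hM : 0 ≤ M)
    (w w' D : ℝ → ℝ)
    (hw : ∀ t ∈ Icc (0:ℝ) T, HasDerivAt w (w' t) t)
    (hw' : ∀ t ∈ Icc (0:ℝ) T, HasDerivAt w' (D t) t)
    (hD : ∀ t ∈ Icc (0:ℝ) T, M * min (w t) 0 ≤ D t)
    (hw0 : 0 ≤ w 0) (hw'0 : 0 ≤ w' 0) :
    ∀ t ∈ Icc (0:ℝ) T, 0 ≤ w t := by
  -- a lower bound for `w` on the compact interval
  obtain ⟨t₀, ht₀, hmax⟩ := isCompact_Icc.exists_isMaxOn (nonempty_Icc.2 hT)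
    (fun t ht => ((hw t ht).continuousAt.neg).continuousWithinAt :
      ContinuousOn (fun t => -(w t)) (Icc (0:ℝ) T))
  set B : ℝ := max (-(w t₀)) 0 with hBdef
  have hB0 : 0 ≤ B := le_max_right _ _
  have hBw : ∀ t ∈ Icc (0:ℝ) T, -B ≤ w t := by
    intro t ht
    have h1 : -(w t) ≤ -(w t₀) := hmax ht
    have h2 : -(w t₀) ≤ B := le_max_left _ _
    linarith
  -- the double-integration step
  have step : ∀ (n : ℕ) (c : ℝ), 0 ≤ c →
      (∀ t ∈ Icc (0:ℝ) T, -(c * t ^ n) ≤ w t) →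
      ∀ t ∈ Icc (0:ℝ) T, -(M * c / (((n:ℝ)+1) * ((n:ℝ)+2)) * t ^ (n+2)) ≤ w t := by
    intro n c hc hcw
    have hn1 : ((n:ℝ) + 1) ≠ 0 := by positivity
    have hn2 : ((n:ℝ) + 2) ≠ 0 := by positivity
    -- first integration: bound on `w'`
    have h1 : ∀ t ∈ Icc (0:ℝ) T, 0 ≤ w' t + M * c / ((n:ℝ)+1) * t ^ (n+1) := by
      apply nonneg_of_deriv_nonneg hT _ (fun t => D t + M * c * t ^ n)
      · intro t ht
        have hp : HasDerivAt (fun t : ℝ => M * c / ((n:ℝ)+1) * t ^ (n+1))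
            (M * c * t ^ n) t := by
          have := (hasDerivAt_pow (n+1) t).const_mul (M * c / ((n:ℝ)+1))
          refine this.congr_deriv ?_
          push_cast
          field_simp
        exact (hw' t ht).add hp
      · intro t ht
        have htn : 0 ≤ t ^ n := pow_nonneg ht.1 n
        have hmin : -(c * t ^ n) ≤ min (w t) 0 := by
          apply le_min (hcw t ht)
          nlinarith
        nlinarith [hD t ht, mul_le_mul_of_nonneg_left hmin hM]
      · have : (0:ℝ) ^ (n+1) = 0 := zero_pow (Nat.succ_ne_zero n)
        simp [this, hw'0]
    -- second integration: bound on `w`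
    have h2 : ∀ t ∈ Icc (0:ℝ) T,
        0 ≤ w t + M * c / (((n:ℝ)+1) * ((n:ℝ)+2)) * t ^ (n+2) := by
      apply nonneg_of_deriv_nonneg hT _
        (fun t => w' t + M * c / ((n:ℝ)+1) * t ^ (n+1))
      · intro t ht
        have hp : HasDerivAt (fun t : ℝ => M * c / (((n:ℝ)+1) * ((n:ℝ)+2)) * t ^ (n+2))
            (M * c / ((n:ℝ)+1) * t ^ (n+1)) t := by
          have := (hasDerivAt_pow (n+2) t).const_mul (M * c / (((n:ℝ)+1) * ((n:ℝ)+2)))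
          refine this.congr_deriv ?_
          push_cast
          field_simp
        exact (hw t ht).add hp
      · exact h1
      · have : (0:ℝ) ^ (n+2) = 0 := zero_pow (by omega)
        simp [this, hw0]
    intro t ht
    have := h2 t ht
    linarith
  -- the main induction: `w t ≥ -(B * M^k / (2k)! * t^(2k))`
  have main : ∀ (k : ℕ) (t : ℝ), t ∈ Icc (0:ℝ) T →
      -(B * M ^ k / ((2*k)! : ℝ) * t ^ (2*k)) ≤ w t := by
    intro k
    induction k with
    | zero => intro t ht; simpa using hBw t ht
    | succ k ih =>
      have hfac : (0:ℝ) < ((2*k)! : ℝ) := by exact_mod_cast (2*k).factorial_pos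
      have hc : (0:ℝ) ≤ B * M ^ k / ((2*k)! : ℝ) := by positivity
      have hstep := step (2*k) (B * M ^ k / ((2*k)! : ℝ)) hc ih
      intro t ht
      have h := hstep t ht
      have heq : -(B * M ^ (k+1) / ((2*(k+1))! : ℝ) * t ^ (2*(k+1)))
          = -(M * (B * M ^ k / ((2*k)! : ℝ)) / ((((2*k:ℕ):ℝ)+1) * (((2*k:ℕ):ℝ)+2))
              * t ^ (2*k+2)) := by
        rw [show 2*(k+1) = (2*k+1)+1 from by ring, Nat.factorial_succ, Nat.factorial_succ]
        push_cast
        rw [show 2*k+1+1 = 2*k+2 from by ring]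
        field_simp
        ring
      rw [show 2*(k+1) = (2*k+1)+1 from by ring] at heq ⊢
      rw [heq]
      exact h
  -- pass to the limit `k → ∞`
  intro t ht
  have hx : 0 ≤ M * t ^ 2 := by positivity
  have hseq : ∀ k : ℕ, -(B * (M * t ^ 2) ^ k / (k ! : ℝ)) ≤ w t := by
    intro k
    refine le_trans ?_ (main k t ht)
    rw [neg_le_neg_iff]
    have h1 : M ^ k * t ^ (2*k) = (M * t ^ 2) ^ k := by
      rw [mul_pow, pow_mul]
    have hfk : (0:ℝ) < (k ! : ℝ) := by exact_mod_cast k.factorial_pos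
    have hf2k : (k ! : ℝ) ≤ ((2*k)! : ℝ) := by
      exact_mod_cast Nat.factorial_le (by omega)
    calc B * M ^ k / ((2*k)! : ℝ) * t ^ (2*k)
        = B * (M * t ^ 2) ^ k / ((2*k)! : ℝ) := by rw [← h1]; ring
      _ ≤ B * (M * t ^ 2) ^ k / (k ! : ℝ) :=
          div_le_div_of_nonneg_left (by positivity) hfk hf2k
  have htend : Tendsto (fun k : ℕ => -(B * (M * t ^ 2) ^ k / (k ! : ℝ))) atTop (nhds 0) := by
    have h0 := (FloorSemiring.tendsto_pow_div_factorial_atTop (K := ℝ) (M * t ^ 2)).const_mul B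
    rw [mul_zero] at h0
    have := h0.neg
    rw [neg_zero] at this
    convert this using 2 with k
    ring
  exact le_of_tendsto htend (Eventually.of_forall hseq)

/-- Proposition 3: comparison principle for `y'' ≥ K₁ yᵞ − K₂(t)`.
If `y₋'' = K₁ y₋^γ − K₂(t)` and `y₊'' ≥ K₁ y₊^γ − K₂(t)` on `[0,T]`, with
`y₊ > 0` on `[0,T]`, `0 < y₋(0) ≤ y₊(0)`, `y₋'(0) ≤ y₊'(0)` and `y₋ > 0`
on `(0,T]`, then `y₋ ≤ y₊` on `[0,T]`.  Here `x ^ γ` is the real power. -/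
theorem stmt3
    (γ K₁ T : ℝ) (hγ : 1 < γ) (hK₁ : 0 ≤ K₁) (hT : 0 ≤ T)
    (K₂ : ℝ → ℝ) (hK₂ : ContinuousOn K₂ (Set.Icc 0 T))
    (ym yp ym' yp' yp'' : ℝ → ℝ)
    (hym' : ∀ t ∈ Set.Icc (0 : ℝ) T, HasDerivAt ym (ym' t) t)
    (hyp' : ∀ t ∈ Set.Icc (0 : ℝ) T, HasDerivAt yp (yp' t) t)
    (hym'' : ∀ t ∈ Set.Icc (0 : ℝ) T,
      HasDerivAt ym' (K₁ * ym t ^ γ - K₂ t) t)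
    (hyp'' : ∀ t ∈ Set.Icc (0 : ℝ) T, HasDerivAt yp' (yp'' t) t)
    (hineq : ∀ t ∈ Set.Icc (0 : ℝ) T, K₁ * yp t ^ γ - K₂ t ≤ yp'' t)
    (hyppos : ∀ t ∈ Set.Icc (0 : ℝ) T, 0 < yp t)
    (hym0 : 0 < ym 0) (h0 : ym 0 ≤ yp 0) (h0' : ym' 0 ≤ yp' 0)
    (hympos : ∀ t ∈ Set.Ioc (0 : ℝ) T, 0 < ym t) :
    ∀ t ∈ Set.Icc (0 : ℝ) T, ym t ≤ yp t := by
  -- positivity of `ym` on all of `[0,T]`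
  have hympos' : ∀ t ∈ Set.Icc (0 : ℝ) T, 0 < ym t := by
    intro t ht
    rcases eq_or_lt_of_le ht.1 with h | h
    · rwa [← h]
    · exact hympos t ⟨h, ht.2⟩
  -- choose the constant `M`: max of `γ * K₁ * ym t ^ (γ-1)` on `[0,T]`
  have hymc : ContinuousOn ym (Icc (0:ℝ) T) :=
    fun t ht => (hym' t ht).continuousAt.continuousWithinAt
  have hgc : ContinuousOn (fun t => γ * K₁ * ym t ^ (γ-1)) (Icc (0:ℝ) T) :=
    continuousOn_const.mul (hymc.rpow_const (fun t ht => Or.inl (hympos' t ht).ne'))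
  obtain ⟨ts, hts, hmax⟩ := isCompact_Icc.exists_isMaxOn (nonempty_Icc.2 hT) hgc
  set M : ℝ := γ * K₁ * ym ts ^ (γ-1) with hMdef
  have hM0 : 0 ≤ M :=
    mul_nonneg (mul_nonneg (by linarith) hK₁) (Real.rpow_nonneg (hympos' ts hts).le _)
  have hMb : ∀ s ∈ Icc (0:ℝ) T, γ * K₁ * ym s ^ (γ-1) ≤ M := fun s hs => hmax hs
  -- the key differential inequality for `w = yp - ym`
  have hD : ∀ s ∈ Icc (0:ℝ) T,
      M * min (yp s - ym s) 0 ≤ yp'' s - (K₁ * ym s ^ γ - K₂ s) := by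
    intro s hs
    have h1 : K₁ * yp s ^ γ - K₂ s ≤ yp'' s := hineq s hs
    have hym := hympos' s hs
    have hyp := hyppos s hs
    have key : M * min (yp s - ym s) 0 ≤ K₁ * yp s ^ γ - K₁ * ym s ^ γ := by
      rcases le_total (ym s) (yp s) with hle | hle
      · rw [min_eq_right (sub_nonneg.2 hle), mul_zero]
        have := Real.rpow_le_rpow hym.le hle (by linarith : (0:ℝ) ≤ γ)
        nlinarith
      · rw [min_eq_left (sub_nonpos.2 hle)]
        -- Bernoulli's inequality
        set u : ℝ := yp s / ym s - 1 with hu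
        have hdiv : 0 < yp s / ym s := div_pos hyp hym
        have hs1 : -1 ≤ u := by simp only [hu]; linarith
        have hb : 1 + γ * u ≤ (1 + u) ^ γ :=
          one_add_mul_self_le_rpow_one_add hs1 hγ.le
        have h1u : 1 + u = yp s / ym s := by simp [hu]
        have hymγ : 0 < ym s ^ γ := Real.rpow_pos_of_pos hym γ
        have h2 : ym s ^ γ * (1 + γ * u) ≤ ym s ^ γ * ((1 + u) ^ γ) :=
          mul_le_mul_of_nonneg_left hb hymγ.le
        have h3 : ym s ^ γ * ((1 + u) ^ γ) = yp s ^ γ := by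
          rw [h1u, Real.div_rpow hyp.le hym.le]
          field_simp
        have h4 : ym s ^ γ * u = ym s ^ (γ-1) * (yp s - ym s) := by
          rw [Real.rpow_sub_one hym.ne']
          field_simp [hu]
          rw [hu]; field_simp
        -- so `yp^γ - ym^γ ≥ γ * ym^(γ-1) * (yp - ym)`
        have h5 : ym s ^ γ + γ * (ym s ^ (γ-1) * (yp s - ym s)) ≤ yp s ^ γ := by
          rw [← h3]
          nlinarith [h2, h4]
        have h6 : γ * K₁ * ym s ^ (γ-1) * (yp s - ym s) ≤ K₁ * yp s ^ γ - K₁ * ym s ^ γ := by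
          nlinarith [mul_le_mul_of_nonneg_left h5 hK₁]
        have h7 : M * (yp s - ym s) ≤ γ * K₁ * ym s ^ (γ-1) * (yp s - ym s) :=
          mul_le_mul_of_nonpos_right (hMb s hs) (sub_nonpos.2 hle)
        linarith
    linarith
  -- apply the key lemma
  have hfinal := key_nonneg hT hM0 (fun t => yp t - ym t) (fun t => yp' t - ym' t)
    (fun t => yp'' t - (K₁ * ym t ^ γ - K₂ t))
    (fun t ht => (hyp' t ht).sub (hym' t ht))
    (fun t ht => (hyp'' t ht).sub (hym'' t ht))
    hD (sub_nonneg.2 h0) (sub_nonneg.2 h0')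
  intro t ht
  exact sub_nonneg.1 (hfinal t ht)
end

section
/- Let n ≥ 1, let ρ : ℝⁿ → [0,∞) and V : ℝⁿ → ℝⁿ be measurable, let φ : [0,∞) → [0,∞) be differentiable, and let M ≥ 0 be a constant with φ'(r)² ≤ M φ(r) for all r > 0. Assume that x ↦ ρ(x)φ(|x|), x ↦ ρ(x)|V(x)|², and x ↦ (φ'(|x|)/|x|)⟨V(x),x⟩ρ(x) are integrable on ℝⁿ. Then (∫_{ℝⁿ} (φ'(|x|)/|x|) ⟨V(x),x⟩ ρ(x) dx)² ≤ M (∫_{ℝⁿ} ρ(x)φ(|x|) dx)(∫_{ℝⁿ} ρ(x)|V(x)|² dx), where the first integrand is interpreted as 0 at x = 0. -/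
open MeasureTheory
open scoped Classical
open scoped RealInnerProductSpace

/-- analytic core of Proposition 4: weighted Cauchy–Schwarz.
If `φ'(r)² ≤ M φ(r)` for `r > 0`, then
`(∫ (φ'(|x|)/|x|)⟨V,x⟩ρ dx)² ≤ M (∫ ρφ(|x|) dx)(∫ ρ|V|² dx)`. -/
theorem stmt5
    (n : ℕ) (hn : 1 ≤ n)
    (ρ : EuclideanSpace ℝ (Fin n) → ℝ)
    (V : EuclideanSpace ℝ (Fin n) → EuclideanSpace ℝ (Fin n))
    (hρmeas : Measurable ρ) (hVmeas : Measurable V)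
    (hρpos : ∀ x, 0 ≤ ρ x)
    (φ φ' : ℝ → ℝ)
    (hφdiff : ∀ r : ℝ, 0 < r → HasDerivAt φ (φ' r) r)
    (hφpos : ∀ r : ℝ, 0 ≤ r → 0 ≤ φ r)
    (M : ℝ) (hM : 0 ≤ M)
    (hMφ : ∀ r : ℝ, 0 < r → φ' r ^ 2 ≤ M * φ r)
    (hint1 : Integrable (fun x => ρ x * φ ‖x‖))
    (hint2 : Integrable (fun x => ρ x * ‖V x‖ ^ 2))
    (hint3 : Integrable (fun x : EuclideanSpace ℝ (Fin n) =>
      if x = 0 then 0 else (φ' ‖x‖ / ‖x‖) * ⟪V x, x⟫ * ρ x)) :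
    (∫ x : EuclideanSpace ℝ (Fin n),
        if x = 0 then 0 else (φ' ‖x‖ / ‖x‖) * ⟪V x, x⟫ * ρ x) ^ 2
      ≤ M * (∫ x : EuclideanSpace ℝ (Fin n), ρ x * φ ‖x‖)
          * (∫ x : EuclideanSpace ℝ (Fin n), ρ x * ‖V x‖ ^ 2) := by
  set μ : Measure (EuclideanSpace ℝ (Fin n)) := volume
  set F : EuclideanSpace ℝ (Fin n) → ℝ := fun x =>
    if x = 0 then 0 else (φ' ‖x‖ / ‖x‖) * ⟪V x, x⟫ * ρ x with hF
  set f : EuclideanSpace ℝ (Fin n) → ℝ := fun x => Real.sqrt (ρ x * φ ‖x‖) with hf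
  set g : EuclideanSpace ℝ (Fin n) → ℝ := fun x => Real.sqrt (ρ x * ‖V x‖ ^ 2) with hg
  have h1nn : ∀ x, 0 ≤ ρ x * φ ‖x‖ := fun x =>
    mul_nonneg (hρpos x) (hφpos _ (norm_nonneg x))
  have h2nn : ∀ x, 0 ≤ ρ x * ‖V x‖ ^ 2 := fun x =>
    mul_nonneg (hρpos x) (sq_nonneg _)
  have hfsq : ∀ x, f x ^ 2 = ρ x * φ ‖x‖ := fun x => Real.sq_sqrt (h1nn x)
  have hgsq : ∀ x, g x ^ 2 = ρ x * ‖V x‖ ^ 2 := fun x => Real.sq_sqrt (h2nn x)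
  have hfmeas : AEStronglyMeasurable f μ :=
    (Real.continuous_sqrt.comp_aestronglyMeasurable hint1.aestronglyMeasurable)
  have hgmeas : AEStronglyMeasurable g μ :=
    (Real.continuous_sqrt.comp_aestronglyMeasurable hint2.aestronglyMeasurable)
  have hfL2 : MemLp f 2 μ := by
    rw [memLp_two_iff_integrable_sq hfmeas]
    exact hint1.congr (by simp [hfsq])
  have hgL2 : MemLp g 2 μ := by
    rw [memLp_two_iff_integrable_sq hgmeas]
    exact hint2.congr (by simp [hgsq])
  -- pointwise bound  |F x| ≤ √M * (f x * g x)
  have hpoint : ∀ x, |F x| ≤ Real.sqrt M * (f x * g x) := by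
    intro x
    by_cases hx : x = 0
    · simp [hF, hx]
      positivity
    · have hxn : 0 < ‖x‖ := norm_pos_iff.mpr hx
      have hsqrt : |φ' ‖x‖| ≤ Real.sqrt (M * φ ‖x‖) := by
        have := hMφ ‖x‖ hxn
        calc |φ' ‖x‖| = Real.sqrt (φ' ‖x‖ ^ 2) := (Real.sqrt_sq_eq_abs _).symm
          _ ≤ Real.sqrt (M * φ ‖x‖) := Real.sqrt_le_sqrt this
      have hinner : |⟪V x, x⟫| ≤ ‖V x‖ * ‖x‖ := abs_real_inner_le_norm _ _
      have hfg : f x * g x = ρ x * (Real.sqrt (φ ‖x‖) * ‖V x‖) := by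
        rw [hf, hg, ← Real.sqrt_mul (h1nn x)]
        have : ρ x * φ ‖x‖ * (ρ x * ‖V x‖ ^ 2)
            = (ρ x * (Real.sqrt (φ ‖x‖) * ‖V x‖)) ^ 2 := by
          rw [mul_pow, mul_pow, Real.sq_sqrt (hφpos _ (norm_nonneg x))]
          ring
        rw [this, Real.sqrt_sq (mul_nonneg (hρpos x) (by positivity))]
      have : |F x| = |φ' ‖x‖| / ‖x‖ * |⟪V x, x⟫| * ρ x := by
        simp only [hF, if_neg hx, abs_mul, abs_div, abs_norm,
          abs_of_nonneg (hρpos x)]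
      rw [this, hfg]
      have h1 : |φ' ‖x‖| / ‖x‖ * |⟪V x, x⟫| ≤ |φ' ‖x‖| / ‖x‖ * (‖V x‖ * ‖x‖) := by
        apply mul_le_mul_of_nonneg_left hinner (by positivity)
      have h2 : |φ' ‖x‖| / ‖x‖ * (‖V x‖ * ‖x‖) = |φ' ‖x‖| * ‖V x‖ := by
        field_simp
      have h3 : |φ' ‖x‖| * ‖V x‖ ≤ Real.sqrt M * Real.sqrt (φ ‖x‖) * ‖V x‖ := by
        apply mul_le_mul_of_nonneg_right _ (norm_nonneg _)
        rw [← Real.sqrt_mul hM]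
        exact hsqrt
      calc |φ' ‖x‖| / ‖x‖ * |⟪V x, x⟫| * ρ x
          ≤ |φ' ‖x‖| * ‖V x‖ * ρ x := by
            rw [← h2]; exact mul_le_mul_of_nonneg_right h1 (hρpos x)
        _ ≤ Real.sqrt M * Real.sqrt (φ ‖x‖) * ‖V x‖ * ρ x :=
            mul_le_mul_of_nonneg_right h3 (hρpos x)
        _ = Real.sqrt M * (ρ x * (Real.sqrt (φ ‖x‖) * ‖V x‖)) := by ring
  have hfgnn : ∀ x, 0 ≤ f x * g x := fun x =>
    mul_nonneg (Real.sqrt_nonneg _) (Real.sqrt_nonneg _)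
  -- integrability of f*g
  have hfg_int : Integrable (fun x => f x * g x) μ := by
    refine Integrable.mono' ((hint1.add hint2).div_const 2) (hfmeas.mul hgmeas) ?_
    filter_upwards with x
    rw [Real.norm_of_nonneg (hfgnn x)]
    have h := two_mul_le_add_sq (f x) (g x)
    have : f x * g x ≤ (f x ^ 2 + g x ^ 2) / 2 := by nlinarith [sq_nonneg (f x - g x)]
    simpa [hfsq, hgsq] using this
  -- Hölder / Cauchy–Schwarz
  have hpq : Real.HolderConjugate 2 2 := Real.HolderConjugate.two_two
  have hfL2' : MemLp f (ENNReal.ofReal 2) μ := by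
    convert hfL2 using 2; norm_num
  have hgL2' : MemLp g (ENNReal.ofReal 2) μ := by
    convert hgL2 using 2; norm_num
  have hCS := integral_mul_le_Lp_mul_Lq_of_nonneg hpq
    (Filter.Eventually.of_forall fun x => Real.sqrt_nonneg _)
    (Filter.Eventually.of_forall fun x => Real.sqrt_nonneg _) hfL2' hgL2'
  have hIf : (∫ a, f a ^ (2:ℝ) ∂μ) = ∫ x, ρ x * φ ‖x‖ ∂μ := by
    refine integral_congr_ae (Filter.Eventually.of_forall fun a => ?_)
    simp only [Real.rpow_two]
    exact hfsq a
  have hIg : (∫ a, g a ^ (2:ℝ) ∂μ) = ∫ x, ρ x * ‖V x‖ ^ 2 ∂μ := by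
    refine integral_congr_ae (Filter.Eventually.of_forall fun a => ?_)
    simp only [Real.rpow_two]
    exact hgsq a
  rw [hIf, hIg] at hCS
  set A := ∫ x, ρ x * φ ‖x‖ ∂μ
  set B := ∫ x, ρ x * ‖V x‖ ^ 2 ∂μ
  have hA : 0 ≤ A := integral_nonneg h1nn
  have hB : 0 ≤ B := integral_nonneg h2nn
  -- chain of inequalities
  have habs : |∫ x, F x ∂μ| ≤ ∫ x, |F x| ∂μ := by
    simpa using norm_integral_le_integral_norm (μ := μ) F
  have hstep : ∫ x, |F x| ∂μ ≤ Real.sqrt M * ∫ x, f x * g x ∂μ := by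
    rw [← integral_const_mul]
    exact integral_mono hint3.abs (hfg_int.const_mul _) hpoint
  have hfinal : |∫ x, F x ∂μ| ≤ Real.sqrt M * (A ^ (1/2:ℝ) * B ^ (1/2:ℝ)) := by
    refine (habs.trans hstep).trans ?_
    exact mul_le_mul_of_nonneg_left hCS (Real.sqrt_nonneg M)
  have hsq := mul_self_le_mul_self (abs_nonneg _) hfinal
  calc (∫ x, F x ∂μ) ^ 2 = |∫ x, F x ∂μ| * |∫ x, F x ∂μ| := by
        rw [← abs_mul, abs_mul_self, sq]
    _ ≤ (Real.sqrt M * (A ^ (1/2:ℝ) * B ^ (1/2:ℝ)))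
        * (Real.sqrt M * (A ^ (1/2:ℝ) * B ^ (1/2:ℝ))) := hsq
    _ = (Real.sqrt M * Real.sqrt M) * ((A ^ (1/2:ℝ) * A ^ (1/2:ℝ))
        * (B ^ (1/2:ℝ) * B ^ (1/2:ℝ))) := by ring
    _ = M * A * B := by
        rw [Real.mul_self_sqrt hM, ← Real.rpow_add' hA (by norm_num),
          ← Real.rpow_add' hB (by norm_num)]
        norm_num
        ring
end

section
/- Let R > 0 and k > 1, and set B = k/(R²(k−1)) and C = B(k−1) = k/R². Define φ : [0,∞) → ℝ by φ(r) = 1 − Br² for r ∈ [0, R − R/k], φ(r) = C(r−R)² for r ∈ (R − R/k, R], and φ(r) = 0 for r ≥ R. Then: (i) φ is continuously differentiable on [0,∞) with φ'(0) = 0; (ii) 0 ≤ φ(r) ≤ 1 for all r ≥ 0; (iii) φ'(r)² ≤ (4k/R²) φ(r) for all r ≥ 0; and (iv) sup over r ∈ (0,R] of φ'(r)²/φ(r) equals 4k/R² = 4C. -/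
open scoped Classical

noncomputable def phiWeight (R k r : ℝ) : ℝ :=
  if r ≤ R - R / k then 1 - (k / (R ^ 2 * (k - 1))) * r ^ 2
  else if r ≤ R then (k / R ^ 2) * (r - R) ^ 2
  else 0

set_option maxHeartbeats 2000000 in
/-- properties of the weight function `φ` of equation (7):
(i) `φ` is continuously differentiable on `[0,∞)` with `φ'(0) = 0`;
(ii) `0 ≤ φ ≤ 1` on `[0,∞)`;
(iii) `φ'(r)² ≤ (4k/R²) φ(r)` on `[0,∞)`;
(iv) the supremum of `φ'(r)²/φ(r)` over `r ∈ (0,R]` equals `4k/R² = 4C`. -/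
theorem stmt6 (R k : ℝ) (hR : 0 < R) (hk : 1 < k) :
    ∃ φ' : ℝ → ℝ,
      ContinuousOn φ' (Set.Ici 0) ∧
      (∀ r : ℝ, 0 ≤ r → HasDerivAt (phiWeight R k) (φ' r) r) ∧
      φ' 0 = 0 ∧
      (∀ r : ℝ, 0 ≤ r → 0 ≤ phiWeight R k r ∧ phiWeight R k r ≤ 1) ∧
      (∀ r : ℝ, 0 ≤ r → φ' r ^ 2 ≤ (4 * k / R ^ 2) * phiWeight R k r) ∧
      IsGreatest ((fun r => φ' r ^ 2 / phiWeight R k r) '' Set.Ioc 0 R)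
        (4 * k / R ^ 2) := by
  have hk0 : (0:ℝ) < k := lt_trans one_pos hk
  have hk1 : (0:ℝ) < k - 1 := by linarith
  have hR2 : (0:ℝ) < R ^ 2 := by positivity
  obtain ⟨B, hB⟩ : ∃ x : ℝ, x = k / (R ^ 2 * (k - 1)) := ⟨_, rfl⟩
  obtain ⟨C, hC⟩ : ∃ x : ℝ, x = k / R ^ 2 := ⟨_, rfl⟩
  obtain ⟨r₀, hr₀⟩ : ∃ x : ℝ, x = R - R / k := ⟨_, rfl⟩
  have hBpos : 0 < B := by rw [hB]; positivity
  have hCpos : 0 < C := by rw [hC]; positivity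
  have hr₀pos : 0 < r₀ := by
    rw [hr₀, sub_pos, div_lt_iff₀ hk0]; nlinarith
  have hr₀R : r₀ < R := by
    have : 0 < R / k := by positivity
    rw [hr₀]; linarith
  -- key algebraic identities
  have hBr₀ : B * k * r₀ ^ 2 = k - 1 := by
    rw [hB, hr₀]; field_simp
  have hCB : C = B * (k - 1) := by rw [hB, hC]; field_simp
  have hval : 1 - B * r₀ ^ 2 = C * (r₀ - R) ^ 2 := by
    rw [hB, hC, hr₀]; field_simp; ring
  have hval' : C * (r₀ - R) ^ 2 = 1 / k := by
    rw [hC, hr₀]; field_simp; ring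
  have hder : -(2 * B * r₀) = 2 * C * (r₀ - R) := by
    rw [hB, hC, hr₀]; field_simp; ring
  obtain ⟨D, hD⟩ : ∃ D : ℝ → ℝ, D = fun r =>
      if r ≤ r₀ then -(2 * B * r) else if r ≤ R then 2 * C * (r - R) else 0 := ⟨_, rfl⟩
  -- phiWeight equalities
  have heq1 : ∀ r : ℝ, r ≤ r₀ → phiWeight R k r = 1 - B * r ^ 2 := by
    intro r hr; rw [phiWeight, if_pos (hr₀ ▸ hr), ← hB]
  have heq2 : ∀ r : ℝ, r₀ < r → r ≤ R → phiWeight R k r = C * (r - R) ^ 2 := by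
    intro r h1 h2
    rw [phiWeight, if_neg (not_le.mpr (hr₀ ▸ h1)), if_pos h2, ← hC]
  have heq2' : ∀ r : ℝ, r₀ ≤ r → r ≤ R → phiWeight R k r = C * (r - R) ^ 2 := by
    intro r h1 h2
    rcases eq_or_lt_of_le h1 with h | h
    · rw [← h, heq1 r₀ le_rfl, hval]
    · exact heq2 r h h2
  have heq3 : ∀ r : ℝ, R ≤ r → phiWeight R k r = 0 := by
    intro r hr
    rcases eq_or_lt_of_le hr with h | h
    · rw [← h, heq2' R hr₀R.le le_rfl]; ring
    · rw [phiWeight, if_neg, if_neg (not_le.mpr h)]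
      rw [← hr₀]
      exact not_le.mpr (lt_trans hr₀R h)
  -- derivatives of the model functions
  have hf1 : ∀ r : ℝ, HasDerivAt (fun x => 1 - B * x ^ 2) (-(2 * B * r)) r := by
    intro r
    have h := ((hasDerivAt_pow 2 r).const_mul B).const_sub 1
    refine h.congr_deriv ?_; push_cast; ring
  have hf2 : ∀ r : ℝ, HasDerivAt (fun x => C * (x - R) ^ 2) (2 * C * (r - R)) r := by
    intro r
    have h := (((hasDerivAt_id r).sub_const R).pow 2).const_mul C
    refine h.congr_deriv ?_; simp only [id_eq]; push_cast; ring
  -- HasDerivAt everywhere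
  have hderiv : ∀ r : ℝ, HasDerivAt (phiWeight R k) (D r) r := by
    intro r
    rcases lt_trichotomy r r₀ with h | h | h
    · have hDr : D r = -(2 * B * r) := by rw [hD]; exact if_pos h.le
      rw [hDr]
      refine (hf1 r).congr_of_eventuallyEq ?_
      filter_upwards [eventually_lt_nhds h] with x hx
      exact heq1 x hx.le
    · -- r = r₀
      subst h
      have hDr : D r = -(2 * B * r) := by rw [hD]; exact if_pos le_rfl
      rw [hDr]
      have hleft : HasDerivWithinAt (phiWeight R k) (-(2 * B * r)) (Set.Iic r) r :=
        ((hf1 r).hasDerivWithinAt).congr (fun x hx => heq1 x hx) (heq1 r le_rfl)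
      have hright : HasDerivWithinAt (phiWeight R k) (-(2 * B * r)) (Set.Ici r) r := by
        rw [hder]
        refine ((hf2 r).hasDerivWithinAt).congr_of_eventuallyEq ?_ ?_
        · filter_upwards [Filter.eventually_mem_set.mpr self_mem_nhdsWithin,
            eventually_nhdsWithin_of_eventually_nhds (eventually_lt_nhds hr₀R)] with x hx hx'
          exact heq2' x hx hx'.le
        · rw [heq1 r le_rfl, hval]
      have := hleft.union hright
      rwa [Set.Iic_union_Ici, hasDerivWithinAt_univ] at this
    · rcases lt_trichotomy r R with h2 | h2 | h2
      · have hDr : D r = 2 * C * (r - R) := by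
          rw [hD]; simp only [if_neg (not_le.mpr h), if_pos h2.le]
        rw [hDr]
        refine (hf2 r).congr_of_eventuallyEq ?_
        filter_upwards [eventually_lt_nhds h2, eventually_gt_nhds h] with x h2x h1x
        exact heq2 x h1x h2x.le
      · have hDr : D r = 0 := by
          rw [hD]; simp only [if_neg (not_le.mpr h), if_pos h2.le]
          rw [h2]; ring
        rw [hDr]
        have hleft : HasDerivWithinAt (phiWeight R k) 0 (Set.Iic r) r := by
          have h0 : (0:ℝ) = 2 * C * (r - R) := by rw [h2]; ring
          rw [h0]
          refine ((hf2 r).hasDerivWithinAt).congr_of_eventuallyEq ?_ ?_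
          · filter_upwards [Filter.eventually_mem_set.mpr self_mem_nhdsWithin,
              eventually_nhdsWithin_of_eventually_nhds (eventually_gt_nhds h)] with x hx hx'
            exact heq2 x hx' (hx.trans h2.le)
          · exact heq2' r h.le h2.le
        have hright : HasDerivWithinAt (phiWeight R k) 0 (Set.Ici r) r :=
          (hasDerivWithinAt_const r _ (0:ℝ)).congr
            (fun x hx => heq3 x (h2 ▸ hx)) (heq3 r h2.ge)
        have := hleft.union hright
        rwa [Set.Iic_union_Ici, hasDerivWithinAt_univ] at this
      · have hDr : D r = 0 := by
          rw [hD]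
          simp only [if_neg (not_le.mpr h), if_neg (not_le.mpr h2)]
        rw [hDr]
        refine (hasDerivAt_const r (0:ℝ)).congr_of_eventuallyEq ?_
        filter_upwards [eventually_gt_nhds h2] with x hx
        exact heq3 x hx.le
  -- continuity of D
  have hcont : Continuous D := by
    rw [hD]
    refine Continuous.if_le ?_ ?_ continuous_id continuous_const ?_
    · fun_prop
    · refine Continuous.if_le ?_ ?_ continuous_id continuous_const ?_
      · fun_prop
      · exact continuous_const
      · intro x hx; rw [hx]; ring
    · intro x hx
      rw [hx, if_pos hr₀R.le, hder]
  -- bounds (part ii)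
  have hbounds : ∀ r : ℝ, 0 ≤ r → 0 ≤ phiWeight R k r ∧ phiWeight R k r ≤ 1 := by
    intro r hr
    rcases le_or_gt r r₀ with h | h
    · rw [heq1 r h]
      have hsq : r ^ 2 ≤ r₀ ^ 2 := by nlinarith
      constructor
      · have h1 : B * k * r ^ 2 ≤ B * k * r₀ ^ 2 :=
          mul_le_mul_of_nonneg_left hsq (by positivity)
        rw [hBr₀] at h1
        nlinarith
      · nlinarith
    · rcases le_or_gt r R with h2 | h2
      · rw [heq2 r h h2]
        refine ⟨by positivity, ?_⟩
        have h1 : (r - R) ^ 2 ≤ (r₀ - R) ^ 2 := by nlinarith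
        have h3 : C * (r - R) ^ 2 ≤ C * (r₀ - R) ^ 2 :=
          mul_le_mul_of_nonneg_left h1 hCpos.le
        rw [hval'] at h3
        have : 1 / k ≤ 1 := by rw [div_le_one hk0]; linarith
        linarith
      · rw [heq3 r h2.le]; norm_num
  -- derivative bound (part iii), for 0 ≤ r
  have hbd : ∀ r : ℝ, 0 ≤ r → D r ^ 2 ≤ 4 * C * phiWeight R k r := by
    intro r hr
    rcases le_or_gt r r₀ with h | h
    · rw [heq1 r h, hD]
      simp only [if_pos h]
      have key : B * k * r ^ 2 ≤ k - 1 := by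
        have hsq : r ^ 2 ≤ r₀ ^ 2 := by nlinarith
        have h1 : B * k * r ^ 2 ≤ B * k * r₀ ^ 2 :=
          mul_le_mul_of_nonneg_left hsq (by positivity)
        rwa [hBr₀] at h1
      have hgoal : B ^ 2 * r ^ 2 + C * B * r ^ 2 ≤ C := by
        have he : B ^ 2 * r ^ 2 + C * B * r ^ 2 = B * (B * k * r ^ 2) := by
          rw [hCB]; ring
        rw [he, hCB]
        exact mul_le_mul_of_nonneg_left key hBpos.le
      nlinarith [hgoal]
    · rcases le_or_gt r R with h2 | h2
      · rw [heq2 r h h2, hD]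
        simp only [if_neg (not_le.mpr h), if_pos h2]
        nlinarith [sq_nonneg (r - R)]
      · rw [heq3 r h2.le, hD]
        simp only [if_neg (not_le.mpr h), if_neg (not_le.mpr h2)]
        norm_num
  have h4C : 4 * k / R ^ 2 = 4 * C := by rw [hC]; ring
  refine ⟨D, hcont.continuousOn, fun r _ => hderiv r, ?_, hbounds, ?_, ?_, ?_⟩
  · -- D 0 = 0
    rw [hD]; simp [hr₀pos.le]
  · intro r hr; rw [h4C]; exact hbd r hr
  · -- membership: take r = (r₀ + R)/2
    refine ⟨(r₀ + R) / 2, ⟨by linarith, by linarith⟩, ?_⟩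
    have h1 : r₀ < (r₀ + R) / 2 := by linarith
    have h2 : (r₀ + R) / 2 < R := by linarith
    simp only
    rw [heq2 _ h1 h2.le, h4C]
    have hDr : D ((r₀ + R) / 2) = 2 * C * ((r₀ + R) / 2 - R) := by
      rw [hD]; simp only [if_neg (not_le.mpr h1), if_pos h2.le]
    rw [hDr]
    have hne : ((r₀ + R) / 2 - R) ^ 2 ≠ 0 := pow_ne_zero _ (sub_ne_zero.mpr h2.ne)
    have hfac : (2 * C * ((r₀ + R) / 2 - R)) ^ 2
        = 4 * C * (C * ((r₀ + R) / 2 - R) ^ 2) := by ring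
    rw [hfac, mul_div_assoc, div_self (mul_ne_zero hCpos.ne' hne), mul_one]
  · rintro y ⟨r, ⟨hr1, hr2⟩, rfl⟩
    simp only
    have hnn : 0 ≤ phiWeight R k r := (hbounds r hr1.le).1
    rcases eq_or_lt_of_le hnn with h0 | h0
    · rw [← h0, div_zero]; positivity
    · rw [div_le_iff₀ h0, h4C]
      exact hbd r hr1.le
end

section
/- Fix a₀ ∈ ℝ and define ψ(t) = √((2+a₀²)t² + 2a₀t + 1) for t ∈ ℝ. Then (2+a₀²)t² + 2a₀t + 1 > 0 for all t ∈ ℝ (so ψ is well-defined, positive, and smooth), and the functions V(t,x) = (ψ'(t)/ψ(t))·x and ρ(t,x) = ψ(t)³/(ψ(t)² + x²)² satisfy the one-dimensional continuity equation ∂_t ρ + ∂_x(ρV) = 0 at every (t,x) ∈ ℝ × ℝ. -/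
/-- The time factor of the paper's explicit globally smooth 1D solution (γ = 3):
`ψ(t) = √((2+a₀²)t² + 2a₀t + 1)`. -/
noncomputable def psi (a₀ t : ℝ) : ℝ :=
  Real.sqrt ((2 + a₀ ^ 2) * t ^ 2 + 2 * a₀ * t + 1)

lemma Qpos (a₀ t : ℝ) : 0 < (2 + a₀ ^ 2) * t ^ 2 + 2 * a₀ * t + 1 := by
  rcases eq_or_ne t 0 with h | h
  · simp [h]
  · nlinarith [sq_nonneg (a₀ * t + 1), sq_pos_of_ne_zero h]

lemma psi_pos (a₀ t : ℝ) : 0 < psi a₀ t := Real.sqrt_pos.mpr (Qpos a₀ t)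

lemma psi_sq (a₀ t : ℝ) : psi a₀ t ^ 2 = (2 + a₀ ^ 2) * t ^ 2 + 2 * a₀ * t + 1 :=
  Real.sq_sqrt (Qpos a₀ t).le

lemma psi_hasDerivAt (a₀ t : ℝ) :
    HasDerivAt (psi a₀) (((2 + a₀ ^ 2) * (2 * t) + 2 * a₀) / (2 * psi a₀ t)) t := by
  have hQ : HasDerivAt (fun s : ℝ => (2 + a₀ ^ 2) * s ^ 2 + 2 * a₀ * s + 1)
      ((2 + a₀ ^ 2) * (2 * t) + 2 * a₀) t := by
    have h1 := (hasDerivAt_pow 2 t).const_mul (2 + a₀ ^ 2)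
    have h2 := (hasDerivAt_id t).const_mul (2 * a₀)
    have := (h1.add h2).add_const 1
    exact this.congr_deriv (by ring)
  have hne : ((2 + a₀ ^ 2) * t ^ 2 + 2 * a₀ * t + 1) ≠ 0 := (Qpos a₀ t).ne'
  have hc := (Real.hasDerivAt_sqrt hne).comp t hQ
  have h3 : ((2 + a₀ ^ 2) * (2 * t) + 2 * a₀) / (2 * psi a₀ t)
      = 1 / (2 * Real.sqrt ((2 + a₀ ^ 2) * t ^ 2 + 2 * a₀ * t + 1))
        * ((2 + a₀ ^ 2) * (2 * t) + 2 * a₀) := by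
    rw [psi]; ring
  rw [h3]
  exact hc

/-- mass conservation for the explicit solution (16).
The quadratic under the root is everywhere positive, and
`ρ(t,x) = ψ³/(ψ²+x²)²`, `V(t,x) = (ψ'/ψ)x` satisfy `∂ₜρ + ∂ₓ(ρV) = 0`. -/
theorem stmt9 (a₀ : ℝ) :
    (∀ t : ℝ, 0 < (2 + a₀ ^ 2) * t ^ 2 + 2 * a₀ * t + 1) ∧
    ∀ t x : ℝ,
      deriv (fun s => (psi a₀ s) ^ 3 / ((psi a₀ s) ^ 2 + x ^ 2) ^ 2) t
        + deriv (fun y =>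
            ((psi a₀ t) ^ 3 / ((psi a₀ t) ^ 2 + y ^ 2) ^ 2)
              * ((deriv (psi a₀) t / psi a₀ t) * y)) x = 0 := by
  refine ⟨Qpos a₀, fun t x => ?_⟩
  set p := psi a₀ t with hp
  have hppos := psi_pos a₀ t
  set d := ((2 + a₀ ^ 2) * (2 * t) + 2 * a₀) / (2 * p) with hd
  have hψ : HasDerivAt (psi a₀) d t := psi_hasDerivAt a₀ t
  have hden : ∀ s x : ℝ, (psi a₀ s) ^ 2 + x ^ 2 ≠ 0 := fun s x => by
    have := psi_pos a₀ s; positivity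
  -- time derivative
  have hnum : HasDerivAt (fun s => (psi a₀ s) ^ 3) (3 * p ^ 2 * d) t := by
    simpa [mul_comm, mul_assoc] using hψ.fun_pow 3
  have hdenom : HasDerivAt (fun s => ((psi a₀ s) ^ 2 + x ^ 2) ^ 2)
      (2 * (p ^ 2 + x ^ 2) * (2 * p * d)) t := by
    have h1 : HasDerivAt (fun s => (psi a₀ s) ^ 2 + x ^ 2) (2 * p * d) t := by
      simpa [mul_comm, mul_assoc] using (hψ.pow 2).add_const (x ^ 2)
    simpa [mul_comm, mul_assoc] using h1.fun_pow 2
  have ht : HasDerivAt (fun s => (psi a₀ s) ^ 3 / ((psi a₀ s) ^ 2 + x ^ 2) ^ 2)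
      ((3 * p ^ 2 * d * ((p ^ 2 + x ^ 2) ^ 2)
        - p ^ 3 * (2 * (p ^ 2 + x ^ 2) * (2 * p * d))) / ((p ^ 2 + x ^ 2) ^ 2) ^ 2) t :=
    hnum.div hdenom (pow_ne_zero 2 (hden t x))
  -- space derivative
  have hfun : (fun y => (p ^ 3 / (p ^ 2 + y ^ 2) ^ 2) * ((d / p) * y))
      = fun y => (p ^ 3 * ((d / p) * y)) / ((p ^ 2 + y ^ 2) ^ 2) := by
    funext y; ring
  have h1 : HasDerivAt (fun y : ℝ => p ^ 3 * ((d / p) * y)) (p ^ 3 * (d / p)) x := by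
    simpa [mul_assoc] using ((hasDerivAt_id x).const_mul (d / p)).const_mul (p ^ 3)
  have h2 : HasDerivAt (fun y : ℝ => ((p ^ 2 + y ^ 2) ^ 2))
      (2 * (p ^ 2 + x ^ 2) * (2 * x)) x := by
    have := ((hasDerivAt_pow 2 x).const_add (p ^ 2)).fun_pow 2
    simpa [mul_comm, mul_assoc] using this
  have hx : HasDerivAt (fun y => (p ^ 3 / (p ^ 2 + y ^ 2) ^ 2) * ((d / p) * y))
      ((p ^ 3 * (d / p) * ((p ^ 2 + x ^ 2) ^ 2)
        - p ^ 3 * ((d / p) * x) * (2 * (p ^ 2 + x ^ 2) * (2 * x)))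
        / ((p ^ 2 + x ^ 2) ^ 2) ^ 2) x := by
    rw [hfun]
    exact h1.div h2 (pow_ne_zero 2 (hden t x))
  rw [ht.deriv, hψ.deriv, hx.deriv]
  have hps : p ^ 2 = (2 + a₀ ^ 2) * t ^ 2 + 2 * a₀ * t + 1 := psi_sq a₀ t
  have hdxne : (p ^ 2 + x ^ 2) ≠ 0 := hden t x
  rw [hd]
  field_simp
  ring
end

section
/- Fix a₀ ∈ ℝ and define ψ(t) = √((2+a₀²)t² + 2a₀t + 1), V(t,x) = (ψ'(t)/ψ(t))·x, ρ(t,x) = ψ(t)³/(ψ(t)² + x²)², p(t,x) = 1/(ψ(t)(ψ(t)² + x²)). Then for every t ∈ ℝ the kinetic energy is E_k(t) = (1/2)∫_ℝ ρ(t,x)V(t,x)² dx = π ψ'(t)²/4, the potential energy is E_p(t) = (1/2)∫_ℝ p(t,x) dx = π/(2ψ(t)²), and the total energy is constant: E_k(t) + E_p(t) = (π/4)(2 + a₀²) for all t. -/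
open MeasureTheory Real Filter Topology Set

lemma aux_hasDerivAt (u : ℝ) :
    HasDerivAt (fun u : ℝ => Real.arctan u / 2 - u / (2 * (1 + u ^ 2)))
      (u ^ 2 / (1 + u ^ 2) ^ 2) u := by
  have h1 : (0:ℝ) < 1 + u ^ 2 := by positivity
  have hA : HasDerivAt (fun u : ℝ => Real.arctan u / 2) (1 / (1 + u ^ 2) / 2) u :=
    (Real.hasDerivAt_arctan u).div_const 2
  have hB : HasDerivAt (fun u : ℝ => u / (2 * (1 + u ^ 2)))
      ((1 * (2 * (1 + u ^ 2)) - u * (2 * (2 * u))) / (2 * (1 + u ^ 2)) ^ 2) u := by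
    exact (hasDerivAt_id u).div
      (((hasDerivAt_pow 2 u).const_add 1).const_mul 2 |>.congr_deriv (by ring)) (by positivity)
  have := hA.sub hB
  refine this.congr_deriv ?_
  field_simp
  ring

lemma aux_integrable : Integrable (fun u : ℝ => u ^ 2 / (1 + u ^ 2) ^ 2) := by
  refine integrable_inv_one_add_sq.mono ?_ ?_
  · exact (Continuous.div (by continuity) (by continuity)
      (fun u => by positivity)).aestronglyMeasurable
  · refine Filter.Eventually.of_forall fun u => ?_
    have h1 : (0:ℝ) < 1 + u ^ 2 := by positivity
    rw [Real.norm_eq_abs, Real.norm_eq_abs, abs_of_nonneg (by positivity),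
      abs_of_nonneg (by positivity)]
    rw [div_le_iff₀ (by positivity)]
    calc u ^ 2 ≤ 1 + u ^ 2 := by linarith
      _ = (1 + u ^ 2)⁻¹ * (1 + u ^ 2) ^ 2 := by field_simp

lemma aux_tendsto_zero : Tendsto (fun u : ℝ => u / (2 * (1 + u ^ 2))) atTop (𝓝 0) := by
  apply tendsto_of_tendsto_of_tendsto_of_le_of_le' (g := fun _ : ℝ => (0:ℝ))
    (h := fun u : ℝ => 1 / u) tendsto_const_nhds
    (by simpa [one_div] using (tendsto_inv_atTop_zero : Tendsto (fun r : ℝ => r⁻¹) atTop (𝓝 0)))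
  · filter_upwards [eventually_gt_atTop (0:ℝ)] with u hu
    positivity
  · filter_upwards [eventually_gt_atTop (0:ℝ)] with u hu
    rw [div_le_div_iff₀ (by positivity) hu]
    nlinarith [sq_nonneg u]

lemma aux_tendsto_top : Tendsto (fun u : ℝ => Real.arctan u / 2 - u / (2 * (1 + u ^ 2)))
    atTop (𝓝 (π / 4)) := by
  have h1 : Tendsto (fun u : ℝ => Real.arctan u / 2) atTop (𝓝 (π / 2 / 2)) :=
    (tendsto_nhds_of_tendsto_nhdsWithin Real.tendsto_arctan_atTop).div_const 2
  have := h1.sub aux_tendsto_zero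
  convert this using 2
  ring

lemma aux_tendsto_bot : Tendsto (fun u : ℝ => Real.arctan u / 2 - u / (2 * (1 + u ^ 2)))
    atBot (𝓝 (-(π / 4))) := by
  have h1 : Tendsto (fun u : ℝ => Real.arctan u / 2) atBot (𝓝 (-(π / 2) / 2)) :=
    (tendsto_nhds_of_tendsto_nhdsWithin Real.tendsto_arctan_atBot).div_const 2
  have h2 : Tendsto (fun u : ℝ => u / (2 * (1 + u ^ 2))) atBot (𝓝 0) := by
    have := (aux_tendsto_zero.comp tendsto_neg_atBot_atTop).neg
    simp only [Function.comp] at this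
    convert this using 2 with u
    · ring_nf
    · simp
  have := h1.sub h2
  convert this using 2
  ring

lemma L2 : ∫ u : ℝ, u ^ 2 / (1 + u ^ 2) ^ 2 = π / 2 := by
  have := integral_of_hasDerivAt_of_tendsto aux_hasDerivAt aux_integrable
    aux_tendsto_bot aux_tendsto_top
  rw [this]; ring

lemma L1 {c : ℝ} (hc : 0 < c) : ∫ x : ℝ, 1 / (c ^ 2 + x ^ 2) = π / c := by
  have hc' : c ≠ 0 := hc.ne'
  have h := MeasureTheory.Measure.integral_comp_div (fun y : ℝ => (1 + y ^ 2)⁻¹) c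
  calc ∫ x : ℝ, 1 / (c ^ 2 + x ^ 2)
      = ∫ x : ℝ, c⁻¹ ^ 2 * (1 + (x / c) ^ 2)⁻¹ := by
        congr 1; funext x
        have hx : c ^ 2 + x ^ 2 ≠ 0 := by positivity
        field_simp
    _ = c⁻¹ ^ 2 * ∫ x : ℝ, (1 + (x / c) ^ 2)⁻¹ := integral_const_mul _ _
    _ = c⁻¹ ^ 2 * (|c| • ∫ y : ℝ, (1 + y ^ 2)⁻¹) := by rw [h]
    _ = π / c := by
        rw [integral_univ_inv_one_add_sq, smul_eq_mul, abs_of_pos hc]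
        field_simp

lemma L3 {c : ℝ} (hc : 0 < c) : ∫ x : ℝ, x ^ 2 / (c ^ 2 + x ^ 2) ^ 2 = π / (2 * c) := by
  have hc' : c ≠ 0 := hc.ne'
  have h := MeasureTheory.Measure.integral_comp_div (fun y : ℝ => y ^ 2 / (1 + y ^ 2) ^ 2) c
  calc ∫ x : ℝ, x ^ 2 / (c ^ 2 + x ^ 2) ^ 2
      = ∫ x : ℝ, c⁻¹ ^ 2 * ((x / c) ^ 2 / (1 + (x / c) ^ 2) ^ 2) := by
        congr 1; funext x
        have hx : c ^ 2 + x ^ 2 ≠ 0 := by positivity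
        field_simp
    _ = c⁻¹ ^ 2 * ∫ x : ℝ, (x / c) ^ 2 / (1 + (x / c) ^ 2) ^ 2 := integral_const_mul _ _
    _ = c⁻¹ ^ 2 * (|c| • ∫ u : ℝ, u ^ 2 / (1 + u ^ 2) ^ 2) := by rw [h]
    _ = π / (2 * c) := by
        rw [L2, smul_eq_mul, abs_of_pos hc]
        field_simp

/-- energy decomposition of the explicit solution (16):
`E_k(t) = (1/2)∫ ρV² dx = πψ'(t)²/4`, `E_p(t) = (1/2)∫ p dx = π/(2ψ(t)²)`,
and the total energy is constant: `E_k + E_p = (π/4)(2+a₀²)`. -/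
theorem stmt13 (a₀ : ℝ) :
    ∀ t : ℝ,
      ((1 / 2) * ∫ x : ℝ,
          ((psi a₀ t) ^ 3 / ((psi a₀ t) ^ 2 + x ^ 2) ^ 2)
            * ((deriv (psi a₀) t / psi a₀ t) * x) ^ 2)
        = Real.pi * (deriv (psi a₀) t) ^ 2 / 4 ∧
      ((1 / 2) * ∫ x : ℝ, 1 / (psi a₀ t * ((psi a₀ t) ^ 2 + x ^ 2)))
        = Real.pi / (2 * (psi a₀ t) ^ 2) ∧
      Real.pi * (deriv (psi a₀) t) ^ 2 / 4 + Real.pi / (2 * (psi a₀ t) ^ 2)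
        = (Real.pi / 4) * (2 + a₀ ^ 2) := by
  intro t
  have hQ : 0 < (2 + a₀ ^ 2) * t ^ 2 + 2 * a₀ * t + 1 := by
    have h : (2 + a₀ ^ 2) * t ^ 2 + 2 * a₀ * t + 1 = t ^ 2 + t ^ 2 + (a₀ * t + 1) ^ 2 := by
      ring
    rw [h]
    rcases eq_or_ne t 0 with rfl | ht
    · norm_num
    · positivity
  have hψ : 0 < psi a₀ t := Real.sqrt_pos.mpr hQ
  have hψ' : psi a₀ t ≠ 0 := hψ.ne'
  have hψsq : (psi a₀ t) ^ 2 = (2 + a₀ ^ 2) * t ^ 2 + 2 * a₀ * t + 1 :=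
    Real.sq_sqrt hQ.le
  have hQd : HasDerivAt (fun s : ℝ => (2 + a₀ ^ 2) * s ^ 2 + 2 * a₀ * s + 1)
      (2 * (2 + a₀ ^ 2) * t + 2 * a₀) t := by
    have h1 := ((hasDerivAt_pow 2 t).const_mul (2 + a₀ ^ 2)).add
      ((hasDerivAt_id t).const_mul (2 * a₀))
    have h2 := h1.add_const 1
    refine h2.congr_deriv ?_
    push_cast
    ring
  have hD : HasDerivAt (psi a₀)
      ((2 * (2 + a₀ ^ 2) * t + 2 * a₀) / (2 * psi a₀ t)) t := by
    have := hQd.sqrt hQ.ne'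
    exact this
  have hd : deriv (psi a₀) t = (2 * (2 + a₀ ^ 2) * t + 2 * a₀) / (2 * psi a₀ t) := hD.deriv
  have ed : (deriv (psi a₀) t) ^ 2
      = (2 * (2 + a₀ ^ 2) * t + 2 * a₀) ^ 2
          / (4 * ((2 + a₀ ^ 2) * t ^ 2 + 2 * a₀ * t + 1)) := by
    rw [hd, div_pow, mul_pow, hψsq]
    norm_num
  refine ⟨?_, ?_, ?_⟩
  · have h1 : (∫ x : ℝ,
        ((psi a₀ t) ^ 3 / ((psi a₀ t) ^ 2 + x ^ 2) ^ 2)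
          * ((deriv (psi a₀) t / psi a₀ t) * x) ^ 2)
        = ∫ x : ℝ, (psi a₀ t * (deriv (psi a₀) t) ^ 2)
            * (x ^ 2 / ((psi a₀ t) ^ 2 + x ^ 2) ^ 2) := by
      congr 1; funext x
      have hx : (psi a₀ t) ^ 2 + x ^ 2 ≠ 0 := by positivity
      field_simp
    rw [h1, integral_const_mul, L3 hψ]
    field_simp
    ring
  · have h2 : (∫ x : ℝ, 1 / (psi a₀ t * ((psi a₀ t) ^ 2 + x ^ 2)))
        = ∫ x : ℝ, (psi a₀ t)⁻¹ * (1 / ((psi a₀ t) ^ 2 + x ^ 2)) := by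
      congr 1; funext x
      have hx : (psi a₀ t) ^ 2 + x ^ 2 ≠ 0 := by positivity
      field_simp
    rw [h2, integral_const_mul, L1 hψ]
    rw [eq_div_iff (by positivity : (2 * psi a₀ t ^ 2) ≠ 0)]
    field_simp
  · rw [ed, hψsq]
    have := hQ.ne'
    rw [mul_div_assoc', div_div, div_add_div _ _ (mul_ne_zero (mul_ne_zero four_ne_zero this) four_ne_zero)
      (mul_ne_zero two_ne_zero this), div_eq_iff (mul_ne_zero (mul_ne_zero (mul_ne_zero four_ne_zero this)
      four_ne_zero) (mul_ne_zero two_ne_zero this))]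
    ring
end
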